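/- Let (α_n)_{n≥0} be a sequence of reals with 0 ≤ α_n ≤ 1 for all n and ∑_{n≥0} α_n = ∞. On the space Ω = (ℕ → Bool) equipped with the infinite product over n ∈ ℕ of Bernoulli measures with parameters α_n, the following holds almost surely: W(x)/(∑_{n≤x} α_n) → 1 as x → ∞, where W(x) := #{n ≤ x : ω(n) = true} for ω ∈ Ω. -/

import Mathlib

open Filter Asymptotics MeasureTheory
open scoped Topology

def IsBernoulliProduct (μ : Measure (ℕ → Bool)) (α : ℕ → ℝ) : Prop :=
  IsProbabilityMeasure μ ∧
  ∀ s : Finset ℕ, ∀ b : ℕ → Bool,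
    μ {ω | ∀ n ∈ s, ω n = b n} =
      ∏ n ∈ s, ENNReal.ofReal (if b n then α n else 1 - α n)

namespace BernAux

noncomputable def X (n : ℕ) (ω : ℕ → Bool) : ℝ := if ω n = true then 1 else 0

lemma measSet (n : ℕ) : MeasurableSet {ω : ℕ → Bool | ω n = true} := by
  have : {ω : ℕ → Bool | ω n = true} = (fun ω : ℕ → Bool => ω n) ⁻¹' {true} := by
    ext ω; simp
  rw [this]
  exact measurable_pi_apply n (measurableSet_singleton true)

lemma X_eq_indicator (n : ℕ) :
    X n = Set.indicator {ω : ℕ → Bool | ω n = true} (fun _ => (1:ℝ)) := by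
  funext ω
  by_cases h : ω n = true <;> simp [X, h]

variable {μ : Measure (ℕ → Bool)} {α : ℕ → ℝ}

lemma meas_single (hμ : IsBernoulliProduct μ α) (h0 : ∀ n, 0 ≤ α n) (n : ℕ) :
    μ {ω | ω n = true} = ENNReal.ofReal (α n) := by
  have := hμ.2 {n} (fun _ => true)
  simpa using this

lemma meas_pair (hμ : IsBernoulliProduct μ α) {m n : ℕ} (h : m ≠ n) :
    μ ({ω | ω m = true} ∩ {ω | ω n = true}) =
      ENNReal.ofReal (α m) * ENNReal.ofReal (α n) := by
  have := hμ.2 {m, n} (fun _ => true)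
  have hset : {ω : ℕ → Bool | ∀ k ∈ ({m, n} : Finset ℕ), ω k = true} =
      {ω | ω m = true} ∩ {ω | ω n = true} := by
    ext ω; simp [Set.mem_setOf_eq, forall_and]
  rw [hset] at this
  rw [this, Finset.prod_pair h]
  simp

end BernAux

namespace BernAux
variable {μ : Measure (ℕ → Bool)} {α : ℕ → ℝ}

lemma integrable_X [IsProbabilityMeasure μ] (n : ℕ) : Integrable (X n) μ := by
  rw [X_eq_indicator]
  exact (integrable_const (1:ℝ)).indicator (measSet n)

lemma X_mul_X (m n : ℕ) : (fun ω => X m ω * X n ω) =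
    Set.indicator ({ω : ℕ → Bool | ω m = true} ∩ {ω | ω n = true}) (fun _ => (1:ℝ)) := by
  funext ω
  by_cases h1 : ω m = true <;> by_cases h2 : ω n = true <;>
    simp [X, Set.indicator, h1, h2]

lemma integrable_X_mul_X [IsProbabilityMeasure μ] (m n : ℕ) :
    Integrable (fun ω => X m ω * X n ω) μ := by
  rw [X_mul_X]
  exact (integrable_const (1:ℝ)).indicator ((measSet m).inter (measSet n))

lemma integral_X [IsProbabilityMeasure μ] (hμ : IsBernoulliProduct μ α)
    (h0 : ∀ n, 0 ≤ α n) (n : ℕ) : ∫ ω, X n ω ∂μ = α n := by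
  rw [X_eq_indicator]
  rw [show ∫ ω, Set.indicator {ω : ℕ → Bool | ω n = true} (fun _ => (1:ℝ)) ω ∂μ
      = (μ {ω : ℕ → Bool | ω n = true}).toReal from by
    exact integral_indicator_one (measSet n)]
  rw [meas_single hμ h0 n, ENNReal.toReal_ofReal (h0 n)]

lemma integral_X_mul_X [IsProbabilityMeasure μ] (hμ : IsBernoulliProduct μ α)
    (h0 : ∀ n, 0 ≤ α n) (m n : ℕ) :
    ∫ ω, X m ω * X n ω ∂μ = if m = n then α n else α m * α n := by
  by_cases h : m = n
  · subst h
    have : (fun ω => X m ω * X m ω) = X m := by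
      funext ω; by_cases h1 : ω m = true <;> simp [X, h1]
    rw [this, integral_X hμ h0, if_pos rfl]
  · rw [if_neg h, X_mul_X]
    rw [show ∫ ω, Set.indicator ({ω : ℕ → Bool | ω m = true} ∩ {ω | ω n = true})
        (fun _ => (1:ℝ)) ω ∂μ
        = (μ ({ω : ℕ → Bool | ω m = true} ∩ {ω | ω n = true})).toReal from by
      exact integral_indicator_one ((measSet m).inter (measSet n))]
    rw [meas_pair hμ h, ENNReal.toReal_mul,
      ENNReal.toReal_ofReal (h0 m), ENNReal.toReal_ofReal (h0 n)]

end BernAux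

namespace BernAux
variable {μ : Measure (ℕ → Bool)} {α : ℕ → ℝ}

noncomputable def S (N : ℕ) (ω : ℕ → Bool) : ℝ := ∑ n ∈ Finset.range N, X n ω

lemma integrable_S [IsProbabilityMeasure μ] (N : ℕ) : Integrable (S N) μ := by
  have : S N = fun ω => ∑ n ∈ Finset.range N, X n ω := rfl
  rw [this]
  exact integrable_finset_sum _ (fun n _ => integrable_X n)

lemma integral_S [IsProbabilityMeasure μ] (hμ : IsBernoulliProduct μ α)
    (h0 : ∀ n, 0 ≤ α n) (N : ℕ) :
    ∫ ω, S N ω ∂μ = ∑ n ∈ Finset.range N, α n := by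
  have : ∫ ω, S N ω ∂μ = ∑ n ∈ Finset.range N, ∫ ω, X n ω ∂μ :=
    integral_finset_sum _ (fun n _ => integrable_X n)
  rw [this]
  exact Finset.sum_congr rfl fun n _ => integral_X hμ h0 n

lemma S_sq (N : ℕ) (ω : ℕ → Bool) :
    (S N ω) ^ 2 = ∑ m ∈ Finset.range N, ∑ n ∈ Finset.range N, X m ω * X n ω := by
  rw [sq, S, Finset.sum_mul_sum]

lemma integrable_S_sq [IsProbabilityMeasure μ] (N : ℕ) :
    Integrable (fun ω => (S N ω) ^ 2) μ := by
  have : (fun ω => (S N ω) ^ 2) =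
      fun ω => ∑ m ∈ Finset.range N, ∑ n ∈ Finset.range N, X m ω * X n ω := by
    funext ω; exact S_sq N ω
  rw [this]
  exact integrable_finset_sum _ (fun m _ =>
    integrable_finset_sum _ (fun n _ => integrable_X_mul_X m n))

lemma integral_S_sq [IsProbabilityMeasure μ] (hμ : IsBernoulliProduct μ α)
    (h0 : ∀ n, 0 ≤ α n) (N : ℕ) :
    ∫ ω, (S N ω) ^ 2 ∂μ = (∑ n ∈ Finset.range N, α n) ^ 2
      + ∑ n ∈ Finset.range N, (α n - α n ^ 2) := by
  have h1 : ∫ ω, (S N ω) ^ 2 ∂μ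
      = ∑ m ∈ Finset.range N, ∑ n ∈ Finset.range N, ∫ ω, X m ω * X n ω ∂μ := by
    simp_rw [S_sq]
    rw [integral_finset_sum _ (fun m _ =>
      integrable_finset_sum _ (fun n _ => integrable_X_mul_X m n))]
    exact Finset.sum_congr rfl fun m _ =>
      integral_finset_sum _ (fun n _ => integrable_X_mul_X m n)
  rw [h1]
  have h2 : ∀ m ∈ Finset.range N, ∀ n ∈ Finset.range N,
      ∫ ω, X m ω * X n ω ∂μ = α m * α n + (if m = n then α n - α n ^ 2 else 0) := by
    intro m _ n _
    rw [integral_X_mul_X hμ h0]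
    by_cases h : m = n
    · subst h; rw [if_pos rfl, if_pos rfl]; ring
    · simp [h]
  calc ∑ m ∈ Finset.range N, ∑ n ∈ Finset.range N, ∫ ω, X m ω * X n ω ∂μ
      = ∑ m ∈ Finset.range N, ∑ n ∈ Finset.range N,
          (α m * α n + (if m = n then α n - α n ^ 2 else 0)) := by
        refine Finset.sum_congr rfl fun m hm => Finset.sum_congr rfl fun n hn => ?_
        exact h2 m hm n hn
    _ = (∑ n ∈ Finset.range N, α n) ^ 2 + ∑ n ∈ Finset.range N, (α n - α n ^ 2) := by
        simp_rw [Finset.sum_add_distrib, Finset.sum_ite_eq]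
        rw [← Finset.sum_mul_sum, sq]
        congr 1
        exact Finset.sum_congr rfl fun n hn => by rw [if_pos hn]

lemma variance_le [IsProbabilityMeasure μ] (hμ : IsBernoulliProduct μ α)
    (h0 : ∀ n, 0 ≤ α n) (N : ℕ) :
    ∫ ω, (S N ω - ∑ n ∈ Finset.range N, α n) ^ 2 ∂μ ≤ ∑ n ∈ Finset.range N, α n := by
  set A := ∑ n ∈ Finset.range N, α n with hA
  have hexp : (fun ω => (S N ω - A) ^ 2)
      = fun ω => (S N ω) ^ 2 - (2 * A) * S N ω + A ^ 2 := by
    funext ω; ring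
  rw [hexp]
  have hint1 : Integrable (fun ω => S N ω ^ 2 - 2 * A * S N ω) μ :=
    (integrable_S_sq N).sub ((integrable_S N).const_mul (2*A))
  have hint2 : Integrable (fun ω => 2 * A * S N ω) μ := (integrable_S N).const_mul (2*A)
  rw [integral_add hint1 (integrable_const _)]
  rw [integral_sub (integrable_S_sq N) hint2]
  rw [integral_S_sq hμ h0, integral_const_mul, integral_S hμ h0, integral_const]
  simp only [measure_univ, probReal_univ, ENNReal.toReal_one, smul_eq_mul, one_mul, ← hA]
  have : A ^ 2 + ∑ n ∈ Finset.range N, (α n - α n ^ 2) - 2 * A * A + A ^ 2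
      = ∑ n ∈ Finset.range N, (α n - α n ^ 2) := by ring
  rw [this]
  refine le_trans (Finset.sum_le_sum fun n _ => ?_) le_rfl
  nlinarith [sq_nonneg (α n)]

end BernAux

namespace BernAux
variable {μ : Measure (ℕ → Bool)} {α : ℕ → ℝ}

lemma chebyshev [IsProbabilityMeasure μ] (hμ : IsBernoulliProduct μ α)
    (h0 : ∀ n, 0 ≤ α n) (N : ℕ) {c : ℝ} (hc : 0 < c) :
    μ {ω | c ≤ |S N ω - ∑ n ∈ Finset.range N, α n|}
      ≤ ENNReal.ofReal ((∑ n ∈ Finset.range N, α n) / c ^ 2) := by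
  set A := ∑ n ∈ Finset.range N, α n with hA
  have hint : Integrable (fun ω => (S N ω - A) ^ 2) μ := by
    have hexp : (fun ω => (S N ω - A) ^ 2)
        = fun ω => S N ω ^ 2 - 2 * A * S N ω + A ^ 2 := by
      funext ω; ring
    rw [hexp]
    exact ((integrable_S_sq N).sub ((integrable_S N).const_mul (2*A))).add
      (integrable_const _)
  have hmarkov := mul_meas_ge_le_integral_of_nonneg
    (f := fun ω => (S N ω - A) ^ 2)
    (Filter.Eventually.of_forall fun ω => sq_nonneg _) hint (c ^ 2)
  have hsets : {ω | c ≤ |S N ω - A|} = {ω | c ^ 2 ≤ (S N ω - A) ^ 2} := by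
    ext ω
    simp only [Set.mem_setOf_eq]
    constructor
    · intro h
      nlinarith [abs_nonneg (S N ω - A), sq_abs (S N ω - A)]
    · intro h
      nlinarith [abs_nonneg (S N ω - A), sq_abs (S N ω - A)]
  have hvar := variance_le hμ h0 N
  rw [hsets]
  have hne : μ {ω | c ^ 2 ≤ (S N ω - A) ^ 2} ≠ ⊤ := measure_ne_top μ _
  have htoReal : (μ {ω | c ^ 2 ≤ (S N ω - A) ^ 2}).toReal ≤ A / c ^ 2 := by
    rw [le_div_iff₀ (by positivity)]
    calc (μ {ω | c ^ 2 ≤ (S N ω - A) ^ 2}).toReal * c ^ 2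
        = c ^ 2 * (μ {ω | c ^ 2 ≤ (S N ω - A) ^ 2}).toReal := by ring
      _ ≤ ∫ ω, (S N ω - A) ^ 2 ∂μ := hmarkov
      _ ≤ A := hvar
  calc μ {ω | c ^ 2 ≤ (S N ω - A) ^ 2}
      = ENNReal.ofReal ((μ {ω | c ^ 2 ≤ (S N ω - A) ^ 2}).toReal) :=
        (ENNReal.ofReal_toReal hne).symm
    _ ≤ ENNReal.ofReal (A / c ^ 2) := ENNReal.ofReal_le_ofReal htoReal

end BernAux

namespace BernAux
variable {μ : Measure (ℕ → Bool)} {α : ℕ → ℝ}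

lemma summable_aux (m : ℕ) : Summable (fun k : ℕ => ((m:ℝ)+1)^2/((k:ℝ)+1)^2) := by
  have h1 : Summable (fun k : ℕ => 1/((k:ℝ)+1)^2) := by
    have := (summable_nat_add_iff (f := fun n : ℕ => 1/(n:ℝ)^2) 1).mpr
      (Real.summable_one_div_nat_pow.mpr one_lt_two)
    refine this.congr fun k => ?_
    push_cast
    ring
  have := h1.mul_left (((m:ℝ)+1)^2)
  refine this.congr fun k => ?_
  ring

lemma ae_subseq [IsProbabilityMeasure μ] (hμ : IsBernoulliProduct μ α)
    (h0 : ∀ n, 0 ≤ α n) (Nk : ℕ → ℕ)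
    (hNk : ∀ k : ℕ, ((k:ℝ)+1)^2 ≤ ∑ n ∈ Finset.range (Nk k), α n) :
    ∀ᵐ ω ∂μ, Tendsto
      (fun k => S (Nk k) ω / ∑ n ∈ Finset.range (Nk k), α n) atTop (𝓝 1) := by
  set A : ℕ → ℝ := fun N => ∑ n ∈ Finset.range N, α n with hA
  have hpos : ∀ k, 0 < A (Nk k) := fun k =>
    lt_of_lt_of_le (show (0:ℝ) < ((k:ℝ)+1)^2 by positivity) (hNk k)
  set E : ℕ → ℕ → Set (ℕ → Bool) :=
    fun m k => {ω | A (Nk k)/((m:ℝ)+1) ≤ |S (Nk k) ω - A (Nk k)|} with hE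
  have hmeas : ∀ m k, μ (E m k) ≤ ENNReal.ofReal (((m:ℝ)+1)^2/((k:ℝ)+1)^2) := by
    intro m k
    have hc : 0 < A (Nk k)/((m:ℝ)+1) := div_pos (hpos k) (by positivity)
    refine le_trans (chebyshev hμ h0 (Nk k) hc) (ENNReal.ofReal_le_ofReal ?_)
    have hAne : A (Nk k) ≠ 0 := (hpos k).ne'
    have h1 : A (Nk k) / (A (Nk k)/((m:ℝ)+1))^2 = ((m:ℝ)+1)^2 / A (Nk k) := by
      field_simp
    rw [h1]
    exact div_le_div_of_nonneg_left (by positivity) (by positivity) (hNk k)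
  have hsum : ∀ m : ℕ, (∑' k, μ (E m k)) ≠ ⊤ := by
    intro m
    have hle : (∑' k, μ (E m k))
        ≤ ∑' k : ℕ, ENNReal.ofReal (((m:ℝ)+1)^2/((k:ℝ)+1)^2) :=
      ENNReal.tsum_le_tsum (hmeas m)
    refine ne_top_of_le_ne_top ?_ hle
    rw [← ENNReal.ofReal_tsum_of_nonneg (fun k => by positivity) (summable_aux m)]
    exact ENNReal.ofReal_ne_top
  have hbc : ∀ᵐ ω ∂μ, ∀ m : ℕ, ∀ᶠ k in atTop, ω ∉ E m k :=
    (ae_all_iff).2 fun m => ae_eventually_notMem (hsum m)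
  filter_upwards [hbc] with ω hω
  rw [Metric.tendsto_atTop]
  intro ε hε
  obtain ⟨m, hm⟩ := exists_nat_one_div_lt hε
  obtain ⟨K, hK⟩ := Filter.eventually_atTop.1 (hω m)
  refine ⟨K, fun k hk => ?_⟩
  have hnot := hK k hk
  simp only [hE, Set.mem_setOf_eq, not_le] at hnot
  have hAk := hpos k
  have hAne : A (Nk k) ≠ 0 := hAk.ne'
  rw [Real.dist_eq]
  have hrw : S (Nk k) ω / A (Nk k) - 1 = (S (Nk k) ω - A (Nk k)) / A (Nk k) := by
    field_simp
  rw [hrw, abs_div, abs_of_pos hAk]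
  calc |S (Nk k) ω - A (Nk k)| / A (Nk k)
      < (A (Nk k)/((m:ℝ)+1)) / A (Nk k) := by gcongr
    _ = 1/((m:ℝ)+1) := by field_simp
    _ < ε := hm

end BernAux

namespace BernAux

lemma X_nonneg (n : ℕ) (ω : ℕ → Bool) : 0 ≤ X n ω := by
  unfold X; split <;> norm_num

lemma S_nonneg (N : ℕ) (ω : ℕ → Bool) : 0 ≤ S N ω :=
  Finset.sum_nonneg fun n _ => X_nonneg n ω

lemma S_mono (ω : ℕ → Bool) : Monotone (fun N => S N ω) := fun i j hij =>
  Finset.sum_le_sum_of_subset_of_nonneg (Finset.range_subset_range.2 hij)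
    (fun n _ _ => X_nonneg n ω)

lemma card_eq (ω : ℕ → Bool) (N : ℕ) :
    (((Finset.range N).filter (fun n => ω n = true)).card : ℝ) = S N ω := by
  rw [Finset.card_filter]
  push_cast
  unfold S X
  exact Finset.sum_congr rfl fun n _ => by split <;> simp

end BernAux

open BernAux

theorem stmt_1 (α : ℕ → ℝ) (h0 : ∀ n, 0 ≤ α n) (h1 : ∀ n, α n ≤ 1)
    (hdiv : Tendsto (fun N : ℕ => ∑ n ∈ Finset.range N, α n) atTop atTop)
    (μ : Measure (ℕ → Bool)) (hμ : IsBernoulliProduct μ α) :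
    ∀ᵐ ω ∂μ, Tendsto (fun x : ℕ =>
        ((((Finset.range (x + 1)).filter (fun n => ω n = true)).card : ℝ) /
          ∑ n ∈ Finset.range (x + 1), α n))
      atTop (nhds 1) := by
  classical
  haveI : IsProbabilityMeasure μ := hμ.1
  set A : ℕ → ℝ := fun N => ∑ n ∈ Finset.range N, α n with hA
  have hA_mono : Monotone A := fun i j hij =>
    Finset.sum_le_sum_of_subset_of_nonneg (Finset.range_subset_range.2 hij)
      (fun n _ _ => h0 n)
  have hA_le : ∀ N : ℕ, A N ≤ N := by
    intro N
    calc A N ≤ ∑ n ∈ Finset.range N, (1:ℝ) := Finset.sum_le_sum fun n _ => h1 n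
      _ = N := by simp
  have hex : ∀ k : ℕ, ∃ N, ((k:ℝ)+1)^2 ≤ A N := fun k =>
    (hdiv.eventually_ge_atTop _).exists
  set Nk : ℕ → ℕ := fun k => Nat.find (hex k) with hNkdef
  have hNk_spec : ∀ k : ℕ, ((k:ℝ)+1)^2 ≤ A (Nk k) := fun k => Nat.find_spec (hex k)
  have hApos : ∀ k : ℕ, 0 < A (Nk k) := fun k =>
    lt_of_lt_of_le (show (0:ℝ) < ((k:ℝ)+1)^2 by positivity) (hNk_spec k)
  have hNk_lt : ∀ k : ℕ, A (Nk k) < ((k:ℝ)+1)^2 + 1 := by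
    intro k
    have hne : Nk k ≠ 0 := by
      intro h
      have h2 := hNk_spec k
      rw [h] at h2
      have hA0 : A 0 = 0 := by simp [hA]
      have hposk : (0:ℝ) < ((k:ℝ)+1)^2 := by positivity
      linarith [h2, hA0]
    obtain ⟨M, hM⟩ := Nat.exists_eq_succ_of_ne_zero hne
    have hMlt : M < Nk k := hM ▸ M.lt_succ_self
    have hlt : ¬ ((k:ℝ)+1)^2 ≤ A M := Nat.find_min (hex k) hMlt
    push_neg at hlt
    have hstep : A (Nk k) = A M + α M := by
      rw [hM]; exact Finset.sum_range_succ _ M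
    have := h1 M
    linarith
  have hNk_mono : Monotone Nk := by
    intro j k hjk
    refine Nat.find_min' (hex j) (le_trans ?_ (hNk_spec k))
    have : (j:ℝ) + 1 ≤ (k:ℝ) + 1 := by
      have : (j:ℝ) ≤ k := Nat.cast_le.2 hjk
      linarith
    nlinarith [this]
  have hNk_ge : ∀ k : ℕ, k + 1 ≤ Nk k := by
    intro k
    have h2 : ((k:ℝ)+1)^2 ≤ (Nk k : ℝ) := le_trans (hNk_spec k) (hA_le _)
    have h3 : ((k:ℝ)+1) ≤ ((k:ℝ)+1)^2 := by nlinarith [Nat.cast_nonneg (α := ℝ) k]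
    exact_mod_cast le_trans h3 h2
  have hbc := ae_subseq hμ h0 Nk hNk_spec
  filter_upwards [hbc] with ω hg
  -- reduce to S N ω / A N
  have hrepr : ∀ x : ℕ,
      ((((Finset.range (x + 1)).filter (fun n => ω n = true)).card : ℝ) /
        ∑ n ∈ Finset.range (x + 1), α n) = S (x+1) ω / A (x+1) := by
    intro x
    rw [card_eq]
  rw [show nhds (1:ℝ) = 𝓝 1 from rfl]
  refine Tendsto.congr (fun x => (hrepr x).symm) ?_
  refine (tendsto_add_atTop_iff_nat (f := fun N => S N ω / A N) 1).2 ?_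
  -- squeeze setup
  have t0 : Tendsto (fun k : ℕ => 1/((k:ℝ)+1)) atTop (𝓝 0) :=
    tendsto_one_div_add_atTop_nhds_zero_nat
  have tU : Tendsto (fun k : ℕ => (((k:ℝ)+2)^2+1)/((k:ℝ)+1)^2) atTop (𝓝 1) := by
    have ha : Tendsto (fun k : ℕ => 2*(1/((k:ℝ)+1))) atTop (𝓝 (2*0)) :=
      t0.const_mul 2
    have hb : Tendsto (fun k : ℕ => 2*(1/((k:ℝ)+1))^2) atTop (𝓝 (2*0^2)) :=
      (t0.pow 2).const_mul 2
    have hc := ((tendsto_const_nhds (α := ℕ) (x := (1:ℝ)) (f := atTop)).add ha).add hb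
    have hval : (1:ℝ) + 2*0 + 2*0^2 = 1 := by norm_num
    rw [hval] at hc
    refine hc.congr fun k => ?_
    have hk0 : ((k:ℝ)+1) ≠ 0 := by positivity
    field_simp
    ring
  have hR1 : ∀ k : ℕ, 1 ≤ A (Nk (k+1)) / A (Nk k) := fun k =>
    (one_le_div (hApos k)).2 (hA_mono (hNk_mono (Nat.le_succ k)))
  have hR2 : ∀ k : ℕ, A (Nk (k+1)) / A (Nk k) ≤ (((k:ℝ)+2)^2+1)/((k:ℝ)+1)^2 := by
    intro k
    have hac : A (Nk (k+1)) ≤ ((k:ℝ)+2)^2+1 := by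
      have := hNk_lt (k+1)
      push_cast at this
      linarith
    exact div_le_div₀ (by positivity) hac (by positivity) (hNk_spec k)
  have hRlim : Tendsto (fun k => A (Nk (k+1)) / A (Nk k)) atTop (𝓝 1) :=
    tendsto_of_tendsto_of_tendsto_of_le_of_le tendsto_const_nhds tU hR1 hR2
  have hgs1 : Tendsto (fun k => S (Nk (k+1)) ω / A (Nk (k+1))) atTop (𝓝 1) :=
    (tendsto_add_atTop_iff_nat (f := fun k => S (Nk k) ω / A (Nk k)) 1).2 hg
  have hgs2 : Tendsto (fun k => S (Nk (k+2)) ω / A (Nk (k+2))) atTop (𝓝 1) :=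
    (tendsto_add_atTop_iff_nat (f := fun k => S (Nk k) ω / A (Nk k)) 2).2 hg
  have hRs : Tendsto (fun k => A (Nk (k+2)) / A (Nk (k+1))) atTop (𝓝 1) :=
    (tendsto_add_atTop_iff_nat (f := fun k => A (Nk (k+1)) / A (Nk k)) 1).2 hRlim
  have hU : Tendsto (fun k => S (Nk (k+2)) ω / A (Nk (k+1))) atTop (𝓝 1) := by
    have h := hgs2.mul hRs
    rw [one_mul] at h
    refine h.congr fun k => ?_
    have h2 := (hApos (k+1)).ne'
    have h3 := (hApos (k+2)).ne'
    field_simp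
  have hL : Tendsto (fun k => S (Nk (k+1)) ω / A (Nk (k+2))) atTop (𝓝 1) := by
    have h := hgs1.div hRs one_ne_zero
    rw [div_one] at h
    refine h.congr fun k => ?_
    have h2 := (hApos (k+1)).ne'
    have h3 := (hApos (k+2)).ne'
    simp only [Pi.div_apply]
    rw [div_div_div_cancel_right₀]
    exact h2
  set K : ℕ → ℕ := fun N => Nat.findGreatest (fun k => Nk (k+1) ≤ N) N with hKdef
  have hKtend : Tendsto K atTop atTop := by
    rw [tendsto_atTop]
    intro k
    filter_upwards [eventually_ge_atTop (Nk (k+1))] with N hN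
    have := hNk_ge (k+1)
    exact Nat.le_findGreatest (by omega) hN
  refine tendsto_of_tendsto_of_tendsto_of_le_of_le' (hL.comp hKtend) (hU.comp hKtend) ?_ ?_
  · filter_upwards [eventually_ge_atTop (Nk 1)] with N hN
    have hP : Nk (K N + 1) ≤ N := by
      have h01 : Nk (0+1) ≤ N := by simpa using hN
      exact Nat.findGreatest_spec (P := fun k => Nk (k+1) ≤ N) (Nat.zero_le N) h01
    have hkN : K N < N := by have := hNk_ge (K N + 1); omega
    have hnP : ¬ (Nk (K N + 1 + 1) ≤ N) := by
      exact Nat.findGreatest_is_greatest (P := fun k => Nk (k+1) ≤ N)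
        (Nat.lt_succ_self (K N)) (by omega)
    push_neg at hnP
    show S (Nk (K N + 1)) ω / A (Nk (K N + 2)) ≤ S N ω / A N
    refine div_le_div₀ (S_nonneg N ω) (S_mono ω hP)
      (lt_of_lt_of_le (hApos (K N + 1)) (hA_mono hP)) (hA_mono (le_of_lt hnP))
  · filter_upwards [eventually_ge_atTop (Nk 1)] with N hN
    have hP : Nk (K N + 1) ≤ N := by
      have h01 : Nk (0+1) ≤ N := by simpa using hN
      exact Nat.findGreatest_spec (P := fun k => Nk (k+1) ≤ N) (Nat.zero_le N) h01
    have hkN : K N < N := by have := hNk_ge (K N + 1); omega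
    have hnP : ¬ (Nk (K N + 1 + 1) ≤ N) := by
      exact Nat.findGreatest_is_greatest (P := fun k => Nk (k+1) ≤ N)
        (Nat.lt_succ_self (K N)) (by omega)
    push_neg at hnP
    show S N ω / A N ≤ S (Nk (K N + 2)) ω / A (Nk (K N + 1))
    refine div_le_div₀ (S_nonneg _ ω) (S_mono ω (le_of_lt hnP))
      (hApos (K N + 1)) (hA_mono hP)
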